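/- Let 𝒜 be a well-powered cocomplete abelian category and 𝒯 a subcategory of 𝒜. Then 𝒯 is a strong torsion class (i.e., there is a subcategory ℱ such that (𝒯, ℱ) is a torsion pair) if and only if 𝒯 is a torsion class that is closed under (arbitrary) coproducts. -/

import Mathlib

universe v u

open CategoryTheory CategoryTheory.Limits

section Defs

variable (A : Type u) [Category.{v} A] [Abelian A]

/-- A class of objects is closed under isomorphisms. -/
def IsoClosed (C : Set A) : Prop := ∀ X Y : A, (X ≅ Y) → X ∈ C → Y ∈ C

/-- A class of objects contains the zero object(s). -/
def ContainsZero (C : Set A) : Prop := ∀ X : A, IsZero X → X ∈ C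

/-- A class of objects is closed under quotients: for every epimorphism `C ↠ X`
with `C` in the class, `X` is in the class. -/
def QuotientsClosed (C : Set A) : Prop :=
  ∀ (X Y : A) (f : X ⟶ Y), Epi f → X ∈ C → Y ∈ C

/-- A class of objects is closed under subobjects: for every monomorphism `X ↪ C`
with `C` in the class, `X` is in the class. -/
def SubobjectsClosed (C : Set A) : Prop :=
  ∀ (X Y : A) (f : X ⟶ Y), Mono f → Y ∈ C → X ∈ C

/-- A class of objects is closed under images: for every morphism `f : C₁ ⟶ C₂` with
`C₁, C₂` in the class, the image of `f` is in the class. -/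
def ImagesClosed (C : Set A) : Prop :=
  ∀ (X Y : A) (f : X ⟶ Y), X ∈ C → Y ∈ C → image f ∈ C

/-- A class of objects is closed under extensions: for every short exact sequence
`0 → L → M → N → 0` with `L, N` in the class, `M` is in the class. -/
def ExtClosed (C : Set A) : Prop :=
  ∀ S : ShortComplex A, S.ShortExact → S.X₁ ∈ C → S.X₃ ∈ C → S.X₂ ∈ C

/-- A torsion class: a subcategory closed under quotients and extensions. -/
def IsTorsionClass (C : Set A) : Prop :=
  IsoClosed A C ∧ ContainsZero A C ∧ QuotientsClosed A C ∧ ExtClosed A C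

/-- A torsion-free class: a subcategory closed under subobjects and extensions. -/
def IsTorsionFreeClass (C : Set A) : Prop :=
  IsoClosed A C ∧ ContainsZero A C ∧ SubobjectsClosed A C ∧ ExtClosed A C

/-- `Fac C`: the class of objects admitting an epimorphism from an object of `C`. -/
def Fac (C : Set A) : Set A := {X | ∃ (C₀ : A) (f : C₀ ⟶ X), C₀ ∈ C ∧ Epi f}

/-- `Sub C`: the class of objects admitting a monomorphism into an object of `C`. -/
def Subs (C : Set A) : Set A := {X | ∃ (C₀ : A) (f : X ⟶ C₀), C₀ ∈ C ∧ Mono f}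

/-- `Filt D`: the class of objects admitting a finite filtration
`0 = X₀ ≤ X₁ ≤ ⋯ ≤ Xₙ = X` whose subquotients `Xᵢ/Xᵢ₋₁` all belong to `D`.
Equivalently (inductively): `X` is zero, or `X` is an extension of an object of `D`
by an object of `Filt D`. -/
inductive Filt (D : Set A) : A → Prop
  | zero (X : A) : IsZero X → Filt D X
  | ext (S : ShortComplex A) : S.ShortExact → Filt D S.X₁ → S.X₃ ∈ D → Filt D S.X₂

end Defs

/-!
STATEMENT 18: Let `𝒜` be a well-powered cocomplete abelian category and `𝒯` a
subcategory of `𝒜`. Then `𝒯` is a strong torsion class (there is a subcategory `ℱ`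
such that `(𝒯, ℱ)` is a torsion pair) iff `𝒯` is a torsion class closed under
(arbitrary small) coproducts.
-/

/-- Auxiliary: in a well-powered cocomplete abelian category, if `T` is a torsion class
closed under coproducts, every object `X` has a short exact sequence `0 → tX → X → X/tX → 0`
with `tX ∈ T` and `X/tX` right-orthogonal to `T`. -/
theorem aux_torsion_sequence
    (A : Type u) [Category.{v} A] [Abelian A] [WellPowered.{v} A] [HasColimits A]
    (T : Set A) (hiso : IsoClosed A T)
    (hquot : QuotientsClosed A T) (hext : ExtClosed A T)
    (hcoprod : ∀ (ι : Type v) (f : ι → A), (∀ i, f i ∈ T) → (∐ f) ∈ T) (X : A) :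
    ∃ S : ShortComplex A, S.ShortExact ∧ S.X₁ ∈ T ∧
      (∀ C ∈ T, ∀ f : C ⟶ S.X₃, f = 0) ∧ Nonempty (S.X₂ ≅ X) := by
  classical
  let σ := {S : Subobject X // (S : A) ∈ T}
  let e := equivShrink.{v} σ
  let obj : Shrink.{v} σ → A := fun i => ((e.symm i).1 : A)
  let k : (∐ obj) ⟶ X := Sigma.desc fun i => (e.symm i).1.arrow
  have htX : image k ∈ T :=
    hquot _ _ (factorThruImage k) inferInstance
      (hcoprod _ obj fun i => (e.symm i).2)
  set π : X ⟶ cokernel (image.ι k) := cokernel.π (image.ι k) with hπ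
  -- every map from a T-object to X composes to zero with π
  have hmax : ∀ (C : A), C ∈ T → ∀ (q : C ⟶ X), q ≫ π = 0 := by
    intro C hC q
    have himg : image q ∈ T := hquot _ _ (factorThruImage q) inferInstance hC
    have hmem : ((Subobject.mk (image.ι q) : Subobject X) : A) ∈ T :=
      hiso _ _ (Subobject.underlyingIso (image.ι q)).symm himg
    have h1 : ∀ s : σ, s.1.arrow ≫ π = 0 := by
      intro s
      have hfac : (Sigma.ι obj (e s) ≫ factorThruImage k) ≫ image.ι k
          = (e.symm (e s)).1.arrow := by
        rw [Category.assoc, image.fac]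
        exact Sigma.ι_desc _ _
      have h : (e.symm (e s)).1.arrow ≫ π = 0 := by
        rw [← hfac, Category.assoc, hπ, cokernel.condition, comp_zero]
      rwa [Equiv.symm_apply_apply] at h
    have h1s : (Subobject.mk (image.ι q)).arrow ≫ π = 0 := h1 ⟨_, hmem⟩
    have h2 : image.ι q ≫ π = 0 := by
      rw [← Subobject.underlyingIso_arrow (image.ι q), Category.assoc, h1s, comp_zero]
    rw [← image.fac q, Category.assoc, h2, comp_zero]
  refine ⟨ShortComplex.mk (image.ι k) π (cokernel.condition _), ?_, htX, ?_, ⟨Iso.refl X⟩⟩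
  · exact ShortComplex.ShortExact.mk'
      (ShortComplex.exact_of_g_is_cokernel _ (cokernelIsCokernel _))
      inferInstance inferInstance
  · -- the cokernel is right-orthogonal to T
    intro C hC g
    haveI : Epi π := by rw [hπ]; infer_instance
    -- pullback of π along g
    let P := pullback π g
    let l : image k ⟶ P :=
      pullback.lift (image.ι k) 0 (by rw [cokernel.condition, zero_comp])
    have hlf : l ≫ pullback.fst π g = image.ι k := pullback.lift_fst _ _ _
    have hls : l ≫ pullback.snd π g = 0 := pullback.lift_snd _ _ _
    haveI : Mono l := mono_of_mono_fac hlf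
    -- l is a kernel of pullback.snd
    have hker : IsLimit (KernelFork.ofι l hls) := by
      refine KernelFork.IsLimit.ofι l hls
        (fun {W'} t ht => Abelian.monoLift (image.ι k) (t ≫ pullback.fst π g) ?_)
        (fun {W'} t ht => ?_) (fun {W'} t ht m hm => ?_)
      · rw [Category.assoc, ← hπ, pullback.condition, ← Category.assoc, ht, zero_comp]
      · apply pullback.hom_ext
        · rw [Category.assoc, hlf, Abelian.monoLift_comp]
        · rw [Category.assoc, hls, comp_zero, ht]
      · rw [← cancel_mono (image.ι k), Abelian.monoLift_comp]
        calc m ≫ image.ι k = m ≫ (l ≫ pullback.fst π g) := by rw [hlf]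
          _ = (m ≫ l) ≫ pullback.fst π g := by rw [Category.assoc]
          _ = t ≫ pullback.fst π g := by rw [hm]
    have hSE : (ShortComplex.mk l (pullback.snd π g) hls).ShortExact :=
      ShortComplex.ShortExact.mk'
        (ShortComplex.exact_of_f_is_kernel _ hker) inferInstance inferInstance
    have hP : P ∈ T := hext _ hSE htX hC
    have h0 : pullback.snd π g ≫ g = 0 := by
      rw [← pullback.condition]
      exact hmax P hP (pullback.fst π g)
    rw [← cancel_epi (pullback.snd π g), h0, comp_zero]

theorem strong_torsion_class_iff_closed_under_coproducts
    (A : Type u) [Category.{v} A] [Abelian A] [WellPowered.{v} A] [HasColimits A]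
    (T : Set A) (hiso : IsoClosed A T) (hzero : ContainsZero A T) :
    (∃ F : Set A, IsoClosed A F ∧ ContainsZero A F ∧
        (∀ X ∈ T, ∀ Y ∈ F, ∀ f : X ⟶ Y, f = 0) ∧
        (∀ X : A, ∃ S : ShortComplex A, S.ShortExact ∧
          S.X₁ ∈ T ∧ S.X₃ ∈ F ∧ Nonempty (S.X₂ ≅ X))) ↔
      (IsTorsionClass A T ∧
        ∀ (ι : Type v) (f : ι → A), (∀ i, f i ∈ T) → (∐ f) ∈ T) := by
  constructor
  · rintro ⟨F, hFiso, hFzero, horth, hseq⟩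
    -- key: T is the left orthogonal of F
    have key : ∀ X : A, (∀ Y ∈ F, ∀ f : X ⟶ Y, f = 0) → X ∈ T := by
      intro X hX
      obtain ⟨S, hS, h1, h3, ⟨e⟩⟩ := hseq X
      haveI : Epi S.g := hS.epi_g
      haveI : Mono S.f := hS.mono_f
      have hg : S.g = 0 := by
        have h := hX S.X₃ h3 (e.inv ≫ S.g)
        calc S.g = e.hom ≫ (e.inv ≫ S.g) := by simp
          _ = 0 := by rw [h, comp_zero]
      have hz3 : IsZero S.X₃ := by
        rw [IsZero.iff_id_eq_zero]
        rw [← cancel_epi S.g, hg, comp_zero, zero_comp]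
      haveI : Epi S.f := by
        apply Preadditive.epi_of_cancel_zero
        intro R d hd
        have hdesc := hS.exact.g_desc d hd
        rw [hz3.eq_of_src (hS.exact.desc d hd) 0, comp_zero] at hdesc
        exact hdesc.symm
      haveI : IsIso S.f := isIso_of_mono_of_epi _
      exact hiso S.X₁ X (asIso S.f ≪≫ e) h1
    refine ⟨⟨hiso, hzero, ?_, ?_⟩, ?_⟩
    · -- quotients
      intro X Y f hf hX
      apply key
      intro Z hZ g
      haveI := hf
      rw [← cancel_epi f, horth X hX Z hZ (f ≫ g), comp_zero]
    · -- extensions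
      intro S hS h1 h3
      apply key
      intro Z hZ g
      haveI : Epi S.g := hS.epi_g
      have hf : S.f ≫ g = 0 := horth _ h1 _ hZ _
      have hdesc := hS.exact.g_desc g hf
      rw [horth _ h3 _ hZ (hS.exact.desc g hf), comp_zero] at hdesc
      exact hdesc.symm
    · -- coproducts
      intro ι f hf
      apply key
      intro Z hZ g
      refine Sigma.hom_ext g 0 fun i => ?_
      rw [comp_zero]
      exact horth _ (hf i) _ hZ _
  · rintro ⟨⟨_, _, hquot, hext⟩, hcoprod⟩
    refine ⟨{Y | ∀ X ∈ T, ∀ f : X ⟶ Y, f = 0}, ?_, ?_, ?_, ?_⟩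
    · intro Y₁ Y₂ e hY₁ X hX f
      have h := hY₁ X hX (f ≫ e.inv)
      calc f = (f ≫ e.inv) ≫ e.hom := by simp
        _ = 0 := by rw [h, zero_comp]
    · intro Y hY X hX f
      exact hY.eq_of_tgt f 0
    · intro X hX Y hY f
      exact hY X hX f
    · intro X
      obtain ⟨S, hSE, h1, h3, he⟩ :=
        aux_torsion_sequence A T hiso hquot hext hcoprod X
      exact ⟨S, hSE, h1, fun C hC f => h3 C hC f, he⟩
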